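/- Let G be a finite graph with maximum degree at most Δ ≥ 2 and let u be a vertex. The number of connected vertex subsets S of G with u ∈ S and |S| = s is at most (1/s)·C(sΔ, s−1), where C denotes the binomial coefficient. -/

import Mathlib

open Finset

namespace CSC

lemma decomp_mod {Δ x c : ℕ} (hc : c < Δ) : (x*Δ + c) % Δ = c := by
  rw [mul_comm x Δ, Nat.mul_add_mod, Nat.mod_eq_of_lt hc]

lemma decomp_div {Δ x c : ℕ} (hc : c < Δ) : (x*Δ + c) / Δ = x := by
  have hΔ : 0 < Δ := by omega
  rw [mul_comm, Nat.mul_add_div hΔ, Nat.div_eq_of_lt hc, Nat.add_zero]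

lemma cancel_rot {s x y r : ℕ} (hx : x < s) (hy : y < s)
    (h : (x+r) % s = (y+r) % s) : x = y := by
  have h' : x ≡ y [MOD s] := Nat.ModEq.add_right_cancel' r h
  simpa [Nat.ModEq, Nat.mod_eq_of_lt hx, Nat.mod_eq_of_lt hy] using h'

variable (Δ s : ℕ)

/-- number of elements of `A` with "parent index" `< t`. -/
def Fcnt (A : Finset (Fin (s*Δ))) (t : ℕ) : ℕ :=
  (A.filter (fun a => a.val < t*Δ)).card

/-- validity of a code. -/
def Valid (A : Finset (Fin (s*Δ))) : Prop :=
  A.card = s - 1 ∧ ∀ t, 0 < t → t < s → t ≤ Fcnt Δ s A t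

/-- rotation of a code element by `r` (in the parent coordinate). -/
def rot (r : ℕ) (a : Fin (s*Δ)) : Fin (s*Δ) :=
  ⟨((a.val/Δ + r) % s) * Δ + a.val % Δ, by
    have ha := a.2
    have hΔ : 0 < Δ := Nat.pos_of_ne_zero (by rintro rfl; omega)
    have hs : 0 < s := Nat.pos_of_ne_zero (by rintro rfl; omega)
    have h1 : (a.val/Δ + r) % s < s := Nat.mod_lt _ hs
    have h2 : a.val % Δ < Δ := Nat.mod_lt _ hΔ
    calc ((a.val/Δ + r) % s) * Δ + a.val % Δ
        < ((a.val/Δ + r) % s) * Δ + Δ := by omega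
      _ = ((a.val/Δ + r) % s + 1) * Δ := by ring
      _ ≤ s * Δ := Nat.mul_le_mul_right _ (by omega)⟩

lemma rot_injective (r : ℕ) : Function.Injective (rot Δ s r) := by
  intro a b hab
  have hab' : (rot Δ s r a).val = (rot Δ s r b).val := congrArg Fin.val hab
  have ha := a.2
  have hΔ : 0 < Δ := Nat.pos_of_ne_zero (by rintro rfl; omega)
  have hs : 0 < s := Nat.pos_of_ne_zero (by rintro rfl; omega)
  have h2a : a.val % Δ < Δ := Nat.mod_lt _ hΔ
  have h2b : b.val % Δ < Δ := Nat.mod_lt _ hΔ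
  simp only [rot] at hab'
  have hmod : a.val % Δ = b.val % Δ := by
    rw [← decomp_mod (Δ := Δ) (x := (a.val/Δ + r) % s) h2a, hab', decomp_mod h2b]
  have hdiv : (a.val/Δ + r) % s = (b.val/Δ + r) % s := by
    rw [← decomp_div (Δ := Δ) (x := (a.val/Δ + r) % s) h2a, hab', decomp_div h2b]
  have hda : a.val/Δ < s := (Nat.div_lt_iff_lt_mul hΔ).2 a.2
  have hdb : b.val/Δ < s := (Nat.div_lt_iff_lt_mul hΔ).2 b.2
  have hdiv2 : a.val/Δ = b.val/Δ := cancel_rot hda hdb hdiv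
  have h3 : Δ * (a.val/Δ) = Δ * (b.val/Δ) := by rw [hdiv2]
  have h4 := Nat.div_add_mod a.val Δ
  have h5 := Nat.div_add_mod b.val Δ
  exact Fin.ext (by omega)

end CSC

namespace CSC
variable {Δ s : ℕ}

lemma rot_rot (r r' : ℕ) (a : Fin (s*Δ)) :
    rot Δ s r' (rot Δ s r a) = rot Δ s (r + r') a := by
  have ha := a.2
  have hΔ : 0 < Δ := Nat.pos_of_ne_zero (by rintro rfl; omega)
  have hs : 0 < s := Nat.pos_of_ne_zero (by rintro rfl; omega)
  have h2 : a.val % Δ < Δ := Nat.mod_lt _ hΔ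
  apply Fin.ext
  show ((((a.val/Δ + r) % s) * Δ + a.val % Δ)/Δ + r') % s * Δ
      + (((a.val/Δ + r) % s) * Δ + a.val % Δ) % Δ = _
  rw [decomp_div h2, decomp_mod h2]
  show ((a.val / Δ + r) % s + r') % s * Δ + a.val % Δ
      = (a.val / Δ + (r + r')) % s * Δ + a.val % Δ
  rw [Nat.mod_add_mod, Nat.add_assoc]

lemma rot_mod (r : ℕ) (a : Fin (s*Δ)) : rot Δ s (r % s) a = rot Δ s r a := by
  apply Fin.ext
  show (a.val/Δ + r % s) % s * Δ + a.val % Δ = (a.val/Δ + r) % s * Δ + a.val % Δ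
  rw [Nat.add_mod_mod]

lemma rot_self (a : Fin (s*Δ)) : rot Δ s s a = a := by
  have ha := a.2
  have hΔ : 0 < Δ := Nat.pos_of_ne_zero (by rintro rfl; omega)
  have hs : 0 < s := Nat.pos_of_ne_zero (by rintro rfl; omega)
  have hda : a.val/Δ < s := (Nat.div_lt_iff_lt_mul hΔ).2 a.2
  apply Fin.ext
  show (a.val/Δ + s) % s * Δ + a.val % Δ = a.val
  rw [Nat.add_mod_right, Nat.mod_eq_of_lt hda, mul_comm, Nat.div_add_mod]

lemma rot_zero (a : Fin (s*Δ)) : rot Δ s 0 a = a := by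
  have ha := a.2
  have hΔ : 0 < Δ := Nat.pos_of_ne_zero (by rintro rfl; omega)
  have hs : 0 < s := Nat.pos_of_ne_zero (by rintro rfl; omega)
  have hda : a.val/Δ < s := (Nat.div_lt_iff_lt_mul hΔ).2 a.2
  apply Fin.ext
  show (a.val/Δ + 0) % s * Δ + a.val % Δ = a.val
  rw [Nat.add_zero, Nat.mod_eq_of_lt hda, mul_comm, Nat.div_add_mod]

lemma Fcnt_le_card (A : Finset (Fin (s*Δ))) (t : ℕ) : Fcnt Δ s A t ≤ A.card :=
  Finset.card_filter_le _ _

lemma Fcnt_top (A : Finset (Fin (s*Δ))) : Fcnt Δ s A s = A.card := by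
  unfold Fcnt
  rw [Finset.filter_true_of_mem (fun a _ => a.2)]

/-- the key cycle-lemma computation. -/
lemma Fcnt_rot (hΔ : 0 < Δ) (A : Finset (Fin (s*Δ))) {r : ℕ} (hr0 : 0 < r) (hrs : r < s) :
    Fcnt Δ s (A.image (rot Δ s r)) r + Fcnt Δ s A (s - r) = A.card := by
  have key : ∀ a : Fin (s*Δ), ((rot Δ s r a).val < r * Δ) ↔ ¬ (a.val < (s - r) * Δ) := by
    intro a
    obtain ⟨j, hj⟩ : ∃ j, a.val / Δ = j := ⟨_, rfl⟩
    obtain ⟨c, hc⟩ : ∃ c, a.val % Δ = c := ⟨_, rfl⟩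
    have hcΔ : c < Δ := hc ▸ Nat.mod_lt _ hΔ
    have hjs : j < s := hj ▸ (Nat.div_lt_iff_lt_mul hΔ).2 a.2
    have hsplit : j * Δ + c = a.val := by
      rw [← hj, ← hc, mul_comm]; exact Nat.div_add_mod a.val Δ
    have hxa : (rot Δ s r a).val = (j + r) % s * Δ + c := by
      show (a.val/Δ + r) % s * Δ + a.val % Δ = _
      rw [hj, hc]
    rw [hxa]
    constructor
    · intro h
      have hx : (j + r) % s < r := by
        by_contra hx
        push_neg at hx
        have := Nat.mul_le_mul_right Δ hx
        omega
      have hjge : s - r ≤ j := by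
        by_contra hge
        push_neg at hge
        rw [Nat.mod_eq_of_lt (by omega : j + r < s)] at hx
        omega
      have h1 : (s - r) * Δ ≤ j * Δ := Nat.mul_le_mul_right Δ hjge
      exact Nat.not_lt.2 (le_trans h1 (le_trans (Nat.le_add_right _ _) (le_of_eq hsplit)))
    · intro h
      push_neg at h
      have hjge : s - r ≤ j := hj ▸ (Nat.le_div_iff_mul_le hΔ).2 h
      have hmod : (j + r) % s = j + r - s := by
        have h1 : s ≤ j + r := by omega
        conv_lhs => rw [← Nat.sub_add_cancel h1]
        rw [Nat.add_mod_right, Nat.mod_eq_of_lt (by omega)]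
      rw [hmod]
      calc (j + r - s) * Δ + c < (j + r - s) * Δ + Δ := by omega
        _ = (j + r - s + 1) * Δ := by ring
        _ ≤ r * Δ := Nat.mul_le_mul_right _ (by omega)
  unfold Fcnt
  rw [Finset.filter_image]
  rw [Finset.card_image_of_injective _ (rot_injective Δ s r)]
  rw [Finset.filter_congr (fun a ha => key a)]
  rw [Finset.filter_not]
  rw [Finset.card_sdiff_of_subset (Finset.filter_subset _ _)]
  have := Finset.card_filter_le A (fun a => a.val < (s - r) * Δ)
  omega

/-- a nontrivial rotation of a valid code is not valid. -/
lemma not_valid_rot (hΔ : 0 < Δ) {A : Finset (Fin (s*Δ))} (hA : Valid Δ s A) {r : ℕ}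
    (hr0 : 0 < r) (hrs : r < s) : ¬ Valid Δ s (A.image (rot Δ s r)) := by
  rintro ⟨_, hv'⟩
  have h1 : r ≤ Fcnt Δ s (A.image (rot Δ s r)) r := hv' r hr0 hrs
  have h2 : s - r ≤ Fcnt Δ s A (s - r) := hA.2 (s - r) (by omega) (by omega)
  have h3 := Fcnt_rot hΔ A hr0 hrs
  have h4 := Fcnt_le_card A (s - r)
  have h5 := hA.1
  omega

end CSC

namespace CSC
variable {Δ s : ℕ}

lemma image_rot_rot (A : Finset (Fin (s*Δ))) (a b : ℕ) :
    (A.image (rot Δ s a)).image (rot Δ s b) = A.image (rot Δ s (a + b)) := by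
  rw [Finset.image_image]
  exact Finset.image_congr (fun x _ => rot_rot a b x)

lemma image_rot_self (A : Finset (Fin (s*Δ))) : A.image (rot Δ s s) = A := by
  have : rot Δ s s = id := funext (rot_self)
  rw [this, Finset.image_id]

lemma image_rot_zero (A : Finset (Fin (s*Δ))) : A.image (rot Δ s 0) = A := by
  have : rot Δ s 0 = id := funext (rot_zero)
  rw [this, Finset.image_id]

lemma image_rot_mod (A : Finset (Fin (s*Δ))) (a : ℕ) :
    A.image (rot Δ s (a % s)) = A.image (rot Δ s a) :=
  Finset.image_congr (fun x _ => rot_mod a x)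

theorem card_valid_bound (hΔ : 0 < Δ) (hs : 0 < s) :
    s * Nat.card {A : Finset (Fin (s*Δ)) // Valid Δ s A} ≤ (s*Δ).choose (s-1) := by
  classical
  set Φ : Fin s × {A : Finset (Fin (s*Δ)) // Valid Δ s A} →
      {B : Finset (Fin (s*Δ)) // B.card = s - 1} :=
    fun p => ⟨p.2.1.image (rot Δ s p.1.1), by
      rw [Finset.card_image_of_injective _ (rot_injective Δ s _)]
      exact p.2.2.1⟩ with hΦ
  have hinj : Function.Injective Φ := by
    rintro ⟨r, A, hA⟩ ⟨r', A', hA'⟩ h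
    have himg : A.image (rot Δ s r.1) = A'.image (rot Δ s r'.1) :=
      congrArg Subtype.val h
    have h0 : A.image (rot Δ s (r.1 + (s - r'.1))) =
        A'.image (rot Δ s (r'.1 + (s - r'.1))) := by
      rw [← image_rot_rot, ← image_rot_rot, himg]
    rw [Nat.add_sub_cancel' (le_of_lt r'.2), image_rot_self] at h0
    rw [← image_rot_mod] at h0
    have hdlt : (r.1 + (s - r'.1)) % s < s := Nat.mod_lt _ hs
    by_cases hd : (r.1 + (s - r'.1)) % s = 0
    · rw [hd, image_rot_zero] at h0
      subst h0
      obtain ⟨k, hk⟩ := Nat.dvd_of_mod_eq_zero hd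
      have hr : r.1 < s := r.2
      have hr' : r'.1 < s := r'.2
      have hrr' : r.1 = r'.1 := by
        match k, hk with
        | 0, hk => omega
        | 1, hk => omega
        | (n+2), hk =>
          have h2 : s * 2 ≤ s * (n+2) := Nat.mul_le_mul_left s (by omega)
          omega
      simp only [Prod.mk.injEq]
      exact ⟨Fin.ext hrr', trivial⟩
    · exfalso
      exact not_valid_rot hΔ hA (Nat.pos_of_ne_zero hd) hdlt (h0 ▸ hA')
  have hcard := Nat.card_le_card_of_injective Φ hinj
  rw [Nat.card_prod, Nat.card_eq_fintype_card (α := Fin s), Fintype.card_fin] at hcard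
  have htarget : Nat.card {B : Finset (Fin (s*Δ)) // B.card = s - 1} = (s*Δ).choose (s-1) := by
    rw [Nat.card_eq_fintype_card]
    rw [Fintype.card_finset_len]
    rw [Fintype.card_fin]
  omega

end CSC

namespace CSC

variable {V : Type*} [Fintype V] [LinearOrder V] (G : SimpleGraph V) [DecidableRel G.Adj]
variable (Δ : ℕ) (u : V)

/-- the `k`-th neighbor of `v` (with junk value `v`). -/
def nthNbr (v : V) (k : ℕ) : V := ((G.neighborFinset v).sort (· ≤ ·)).getD k v

lemma exists_nthNbr (hdeg : ∀ v, G.degree v ≤ Δ) {v w : V} (h : G.Adj v w) :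
    ∃ k, k < Δ ∧ nthNbr G v k = w := by
  have hw : w ∈ (G.neighborFinset v).sort (· ≤ ·) := by
    rw [Finset.mem_sort]
    exact (SimpleGraph.mem_neighborFinset G v w).2 h
  obtain ⟨i, hi, hget⟩ := List.getElem_of_mem hw
  have hlen : ((G.neighborFinset v).sort (· ≤ ·)).length = G.degree v := by
    rw [Finset.length_sort]; rfl
  refine ⟨i, by rw [hlen] at hi; exact lt_of_lt_of_le hi (hdeg v), ?_⟩
  rw [nthNbr, List.getD_eq_getElem _ _ hi, hget]

/-- decode a key list into a vertex sequence. -/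
def dec (ks : List ℕ) : ℕ → V
  | 0 => u
  | (m+1) => nthNbr G (dec ks (min (ks.getD m 0 / Δ) m)) (ks.getD m 0 % Δ)
  termination_by m => m
  decreasing_by exact Nat.lt_succ_of_le (min_le_right _ _)

end CSC

namespace CSC

variable {V : Type*} [Fintype V] [LinearOrder V] (G : SimpleGraph V) [DecidableRel G.Adj]
variable (Δ : ℕ) (u : V) (S : Finset V)

/-- candidate keys to extend a partial BFS list `vs`. -/
def cand (vs : List V) : Finset ℕ :=
  (Finset.range (vs.length * Δ)).filter
    (fun q => nthNbr G (vs.getD (q / Δ) u) (q % Δ) ∈ S ∧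
      nthNbr G (vs.getD (q / Δ) u) (q % Δ) ∉ vs)

/-- the invariant of the greedy BFS construction. -/
structure Inv (n : ℕ) (vs : List V) (ks : List ℕ) : Prop where
  l1 : vs.length = n + 1
  l2 : ks.length = n
  nd : vs.Nodup
  sub : ∀ x ∈ vs, x ∈ S
  hd : vs.getD 0 u = u
  hu : u ∈ vs
  bnd : ∀ m < n, ks.getD m 0 / Δ ≤ m
  link : ∀ m < n, nthNbr G (vs.getD (ks.getD m 0 / Δ) u) (ks.getD m 0 % Δ)
      = vs.getD (m+1) u
  dom : ∀ q ∈ ks, ∀ q' ∈ cand G Δ u S vs, q < q'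
  srt : ks.Pairwise (· < ·)

end CSC

namespace CSC

variable {V : Type*} [Fintype V] [LinearOrder V] {G : SimpleGraph V} [inst : DecidableRel G.Adj]
variable {Δ : ℕ} {u : V} {S : Finset V}

lemma cand_nonempty (hdeg : ∀ v, G.degree v ≤ Δ) (huS : u ∈ S)
    (hconn : (G.induce (S : Set V)).Connected)
    {n : ℕ} {vs : List V} {ks : List ℕ} (hInv : Inv G Δ u S n vs ks)
    (hlt : n + 1 < S.card) : (cand G Δ u S vs).Nonempty := by
  classical
  -- find a vertex of S not visited
  have hssub : vs.toFinset ⊆ S := fun x hx => hInv.sub x (List.mem_toFinset.1 hx)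
  have hcardv : vs.toFinset.card = n + 1 := by
    rw [List.toFinset_card_of_nodup hInv.nd, hInv.l1]
  have hnsub : ¬ S ⊆ vs.toFinset := fun h => by
    have := Finset.card_le_card h; omega
  obtain ⟨y, hyS, hyv⟩ := Finset.not_subset.1 hnsub
  have hyv' : y ∉ vs := fun h => hyv (List.mem_toFinset.2 h)
  -- walk from u to y in the induced graph
  obtain ⟨p⟩ := hconn.preconnected ⟨u, Finset.mem_coe.2 huS⟩ ⟨y, Finset.mem_coe.2 hyS⟩
  obtain ⟨d, _, hfst, hsnd⟩ := p.exists_boundary_dart {z : (S : Set V) | z.val ∈ vs}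
    hInv.hu hyv'
  have hadj : G.Adj d.fst.val d.snd.val := d.adj
  have hxv : d.fst.val ∈ vs := hfst
  have hj : vs.idxOf d.fst.val < vs.length := List.idxOf_lt_length_iff.2 hxv
  obtain ⟨k, hkΔ, hkn⟩ := exists_nthNbr G Δ hdeg hadj
  refine ⟨vs.idxOf d.fst.val * Δ + k, ?_⟩
  rw [cand, Finset.mem_filter, Finset.mem_range]
  have hq1 : vs.idxOf d.fst.val * Δ + k < vs.length * Δ := by
    calc vs.idxOf d.fst.val * Δ + k < vs.idxOf d.fst.val * Δ + Δ := by omega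
      _ = (vs.idxOf d.fst.val + 1) * Δ := by ring
      _ ≤ vs.length * Δ := Nat.mul_le_mul_right _ (by omega)
  have hdiv : (vs.idxOf d.fst.val * Δ + k) / Δ = vs.idxOf d.fst.val := decomp_div hkΔ
  have hmod : (vs.idxOf d.fst.val * Δ + k) % Δ = k := decomp_mod hkΔ
  rw [hdiv, hmod]
  have hget : vs.getD (vs.idxOf d.fst.val) u = d.fst.val := by
    rw [List.getD_eq_getElem _ _ hj, List.getElem_idxOf hj]
  rw [hget, hkn]
  exact ⟨hq1, d.snd.2, hsnd⟩

end CSC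

namespace CSC
section
variable {V : Type*} [Fintype V] [LinearOrder V] {G : SimpleGraph V} [inst : DecidableRel G.Adj]
variable {Δ : ℕ} {u : V} {S : Finset V}

lemma inv_step (hdeg : ∀ v, G.degree v ≤ Δ) (huS : u ∈ S)
    (hconn : (G.induce (S : Set V)).Connected)
    {n : ℕ} {vs : List V} {ks : List ℕ} (hInv : Inv G Δ u S n vs ks)
    (hlt : n + 1 < S.card) :
    ∃ vs' ks', Inv G Δ u S (n+1) vs' ks' := by
  classical
  have hne := cand_nonempty hdeg huS hconn hInv hlt
  set q := (cand G Δ u S vs).min' hne with hqdef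
  have hqc : q ∈ cand G Δ u S vs := Finset.min'_mem _ hne
  have hqmem := hqc
  rw [cand, Finset.mem_filter, Finset.mem_range] at hqmem
  obtain ⟨hqlt, hqS, hqnv⟩ := hqmem
  have hΔpos : 0 < Δ := by
    rcases Nat.eq_zero_or_pos Δ with h | h
    · rw [h, Nat.mul_zero] at hqlt; omega
    · exact h
  set w := nthNbr G (vs.getD (q / Δ) u) (q % Δ) with hwdef
  have hqdivlt : q / Δ < vs.length := (Nat.div_lt_iff_lt_mul hΔpos).2 hqlt
  have hlen : vs.length = n + 1 := hInv.l1
  have hklen : ks.length = n := hInv.l2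
  refine ⟨vs ++ [w], ks ++ [q], ?_⟩
  have hgetvs : ∀ i < vs.length, (vs ++ [w]).getD i u = vs.getD i u :=
    fun i hi => List.getD_append _ _ _ _ hi
  have hgetks : ∀ i < ks.length, (ks ++ [q]).getD i 0 = ks.getD i 0 :=
    fun i hi => List.getD_append _ _ _ _ hi
  have hgetw : (vs ++ [w]).getD vs.length u = w := by
    rw [List.getD_append_right _ _ _ _ (le_refl _), Nat.sub_self]
    rfl
  have hgetq : (ks ++ [q]).getD ks.length 0 = q := by
    rw [List.getD_append_right _ _ _ _ (le_refl _), Nat.sub_self]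
    rfl
  have hgetq' : (ks ++ [q]).getD n 0 = q := by
    rw [show n = ks.length from hklen.symm]; exact hgetq
  have hgetw' : (vs ++ [w]).getD (n+1) u = w := by
    rw [show n + 1 = vs.length from hlen.symm]; exact hgetw
  constructor
  case l1 => simp [hlen]
  case l2 => simp [hklen]
  case nd => 
    rw [List.nodup_append]
    exact ⟨hInv.nd, List.nodup_singleton _, fun a ha b hb => by
      rw [List.mem_singleton] at hb; subst hb; exact fun h => hqnv (h ▸ ha)⟩
  case sub =>
    intro x hx
    rcases List.mem_append.1 hx with hx | hx
    · exact hInv.sub x hx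
    · rw [List.mem_singleton] at hx; subst hx; exact hqS
  case hd => rw [hgetvs 0 (by omega), hInv.hd]
  case hu => exact List.mem_append.2 (Or.inl hInv.hu)
  case bnd =>
    intro m hm
    rcases Nat.lt_succ_iff_lt_or_eq.1 hm with hm' | rfl
    · rw [hgetks m (by omega)]; exact hInv.bnd m hm'
    · rw [hgetq']
      omega
  case link =>
    intro m hm
    rcases Nat.lt_succ_iff_lt_or_eq.1 hm with hm' | rfl
    · rw [hgetks m (by omega), hgetvs _ (by have := hInv.bnd m hm'; omega),
        hgetvs (m+1) (by omega)]
      exact hInv.link m hm'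
    · rw [hgetq', hgetvs _ (by rw [hlen]; omega), hgetw']
  case dom =>
    intro q'' hq'' q' hq'
    rw [cand, Finset.mem_filter, Finset.mem_range] at hq'
    obtain ⟨h1, h2, h3⟩ := hq'
    by_cases hcase : q' < vs.length * Δ
    · -- q' is also a candidate for vs
      have hdiv' : q' / Δ < vs.length := (Nat.div_lt_iff_lt_mul hΔpos).2 hcase
      have hstable : (vs ++ [w]).getD (q' / Δ) u = vs.getD (q' / Δ) u := hgetvs _ hdiv'
      rw [hstable] at h2 h3
      have h3' : nthNbr G (vs.getD (q' / Δ) u) (q' % Δ) ∉ vs :=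
        fun h => h3 (List.mem_append.2 (Or.inl h))
      have hq'c : q' ∈ cand G Δ u S vs := by
        rw [cand, Finset.mem_filter, Finset.mem_range]
        exact ⟨hcase, h2, h3'⟩
      have hqle : q ≤ q' := Finset.min'_le _ _ hq'c
      rcases List.mem_append.1 hq'' with hq'' | hq''
      · exact lt_of_lt_of_le (hInv.dom q'' hq'' q hqc) hqle
      · rw [List.mem_singleton] at hq''; subst hq''
        rcases lt_or_eq_of_le hqle with h | h
        · exact h
        · exfalso; subst h
          exact h3 (List.mem_append.2 (Or.inr (by rw [hwdef]; exact List.mem_singleton.2 rfl)))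
    · push_neg at hcase
      rcases List.mem_append.1 hq'' with hq'' | hq''
      · exact lt_of_lt_of_le (lt_of_lt_of_le (hInv.dom q'' hq'' q hqc) (le_of_lt hqlt)) hcase
      · rw [List.mem_singleton] at hq''; subst hq''
        exact lt_of_lt_of_le hqlt hcase
  case srt =>
    rw [List.pairwise_append]
    refine ⟨hInv.srt, List.pairwise_singleton _ _, fun a ha b hb => ?_⟩
    rw [List.mem_singleton] at hb; subst hb
    exact hInv.dom a ha q hqc

end
end CSC

namespace CSC
section
variable {V : Type*} [Fintype V] [LinearOrder V] {G : SimpleGraph V} [inst : DecidableRel G.Adj]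
variable {Δ : ℕ} {u : V} {S : Finset V}

lemma inv_exists (hdeg : ∀ v, G.degree v ≤ Δ) (huS : u ∈ S)
    (hconn : (G.induce (S : Set V)).Connected) :
    ∀ n, n < S.card → ∃ vs ks, Inv G Δ u S n vs ks := by
  intro n
  induction n with
  | zero =>
    intro _
    refine ⟨[u], [], ?_⟩
    constructor
    case l1 => rfl
    case l2 => rfl
    case nd => exact List.nodup_singleton _
    case sub => intro x hx; rw [List.mem_singleton] at hx; subst hx; exact huS
    case hd => rfl
    case hu => exact List.mem_singleton.2 rfl
    case bnd => intro m hm; omega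
    case link => intro m hm; omega
    case dom => intro q hq; simp at hq
    case srt => exact List.Pairwise.nil
  | succ n ih =>
    intro hn
    obtain ⟨vs, ks, hInv⟩ := ih (by omega)
    exact inv_step hdeg huS hconn hInv hn

/-- junk element of `Fin (s*Δ)`. -/
theorem exists_code (hΔpos : 0 < Δ) (hdeg : ∀ v, G.degree v ≤ Δ) (huS : u ∈ S)
    {s : ℕ} (hs : 0 < s) (hcard : S.card = s)
    (hconn : (G.induce (S : Set V)).Connected) :
    ∃ A : Finset (Fin (s*Δ)), Valid Δ s A ∧
      (Finset.range s).image (dec G Δ u ((A.sort (· ≤ ·)).map Fin.val)) = S := by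
  classical
  obtain ⟨vs, ks, hInv⟩ := inv_exists hdeg huS hconn (s-1) (by omega)
  have hlen : vs.length = s := by rw [hInv.l1]; omega
  have hklen : ks.length = s - 1 := hInv.l2
  -- key bounds
  have hkey : ∀ m < s - 1, ks.getD m 0 < (m+1) * Δ := by
    intro m hm
    exact (Nat.div_lt_iff_lt_mul hΔpos).1 (Nat.lt_succ_of_le (hInv.bnd m hm))
  have hbound : ∀ x ∈ ks, x < s * Δ := by
    intro x hx
    obtain ⟨m, hm, hget⟩ := List.getElem_of_mem hx
    have hgd : ks.getD m 0 = x := by rw [List.getD_eq_getElem _ _ hm, hget]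
    have h1 : x < (m+1) * Δ := hgd ▸ hkey m (by omega)
    exact lt_of_lt_of_le h1 (Nat.mul_le_mul_right _ (by omega))
  set l' : List (Fin (s*Δ)) := ks.pmap (fun q hq => (⟨q, hq⟩ : Fin (s*Δ))) hbound with hl'
  have hmap : l'.map Fin.val = ks := by
    rw [hl', List.map_pmap]
    exact (List.pmap_eq_map _).trans (by simp)
  have hl'len : l'.length = s - 1 := by rw [hl', List.length_pmap, hklen]
  have hksnd : ks.Nodup := hInv.srt.imp ne_of_lt
  have hl'nd : l'.Nodup := by
    rw [hl']
    exact List.Nodup.pmap (fun a ha b hb h => congrArg Fin.val h) hksnd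
  have hl'srt : l'.Pairwise (· ≤ ·) := by
    rw [hl', List.pairwise_pmap]
    exact hInv.srt.imp (fun {a b} h ha hb => le_of_lt h)
  set A := l'.toFinset with hA
  have hsort : A.sort (· ≤ ·) = l' := (List.toFinset_sort (· ≤ ·) hl'nd).2 hl'srt
  have hkeys : (A.sort (· ≤ ·)).map Fin.val = ks := by rw [hsort, hmap]
  have hcardA : A.card = s - 1 := by
    rw [hA, List.toFinset_card_of_nodup hl'nd, hl'len]
  -- validity
  have hvalid : Valid Δ s A := by
    refine ⟨hcardA, fun t ht hts => ?_⟩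
    have hjunk : (0 : ℕ) < s * Δ := by positivity
    have hval : ∀ m (hm : m < l'.length), (l'[m]'hm).val = ks.getD m 0 := by
      intro m hm
      have hmk : m < ks.length := by omega
      simp only [hl']
      rw [List.getElem_pmap]
      exact (List.getD_eq_getElem _ _ hmk).symm
    unfold Fcnt
    have hle : (Finset.range t).card ≤ (A.filter (fun a => a.val < t * Δ)).card := by
      apply Finset.card_le_card_of_injOn (fun m => l'.getD m ⟨0, hjunk⟩) ?_ ?_
      · intro m hm
        rw [Finset.coe_range, Set.mem_Iio] at hm
        have hmlen : m < l'.length := by omega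
        show l'.getD m ⟨0, hjunk⟩ ∈ A.filter (fun a => a.val < t * Δ)
        rw [Finset.mem_filter]
        constructor
        · rw [List.getD_eq_getElem _ _ hmlen, hA, List.mem_toFinset]
          exact List.getElem_mem _
        · rw [List.getD_eq_getElem _ _ hmlen, hval m hmlen]
          exact lt_of_lt_of_le (hkey m (by omega)) (Nat.mul_le_mul_right _ (by omega))
      · intro a ha b hb hab
        have hab' : l'.getD a ⟨0, hjunk⟩ = l'.getD b ⟨0, hjunk⟩ := hab
        rw [Finset.coe_range, Set.mem_Iio] at ha hb
        by_contra hne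
        have hvals : ks.getD a 0 = ks.getD b 0 := by
          have h1 : (l'.getD a ⟨0, hjunk⟩).val = ks.getD a 0 := by
            rw [List.getD_eq_getElem _ _ (by omega : a < l'.length)]
            exact hval a (by omega)
          have h2 : (l'.getD b ⟨0, hjunk⟩).val = ks.getD b 0 := by
            rw [List.getD_eq_getElem _ _ (by omega : b < l'.length)]
            exact hval b (by omega)
          rw [← h1, ← h2, hab']
        have hmono := List.pairwise_iff_getElem.1 hInv.srt
        rcases Nat.lt_or_ge a b with h | h
        · have := hmono a b (by omega) (by omega) h
          rw [← List.getD_eq_getElem _ 0 (by omega : a < ks.length),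
            ← List.getD_eq_getElem _ 0 (by omega : b < ks.length)] at this
          omega
        · have hba : b < a := by omega
          have := hmono b a (by omega) (by omega) hba
          rw [← List.getD_eq_getElem _ 0 (by omega : a < ks.length),
            ← List.getD_eq_getElem _ 0 (by omega : b < ks.length)] at this
          omega
    rwa [Finset.card_range] at hle
  -- decoding
  have hdec : ∀ m, m < s → dec G Δ u ks m = vs.getD m u := by
    intro m
    induction m using Nat.strong_induction_on with
    | _ m ih =>
      match m with
      | 0 =>
        intro _
        rw [dec, hInv.hd]
      | (m+1) =>
        intro hm
        rw [dec]
        have hp : ks.getD m 0 / Δ ≤ m := hInv.bnd m (by omega)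
        rw [min_eq_left hp]
        rw [ih _ (by omega) (by omega)]
        exact hInv.link m (by omega)
  refine ⟨A, hvalid, ?_⟩
  rw [hkeys]
  have hvsS : vs.toFinset = S := by
    apply Finset.eq_of_subset_of_card_le
    · intro x hx
      exact hInv.sub x (List.mem_toFinset.1 hx)
    · rw [List.toFinset_card_of_nodup hInv.nd, hlen, hcard]
  ext x
  rw [Finset.mem_image]
  constructor
  · rintro ⟨m, hm, rfl⟩
    rw [Finset.mem_range] at hm
    rw [hdec m hm]
    have hmem : vs.getD m u ∈ vs := by
      rw [List.getD_eq_getElem _ _ (by omega)]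
      exact List.getElem_mem _
    exact hInv.sub _ hmem
  · intro hx
    have hx' : x ∈ vs := by
      rw [← List.mem_toFinset, hvsS]
      exact hx
    clear hx
    rename' hx' => hx
    obtain ⟨m, hm, hget⟩ := List.getElem_of_mem hx
    refine ⟨m, Finset.mem_range.2 (by omega), ?_⟩
    rw [hdec m (by omega), List.getD_eq_getElem _ _ hm, hget]

end
end CSC

/-- Connected-set counting: in a finite graph with maximum degree at most `Δ ≥ 2`, the
number of connected vertex subsets `S` with `u ∈ S` and `|S| = s` is at most
`(1/s) C(sΔ, s-1)`. -/
theorem connected_set_count {V : Type*} [Fintype V] (G : SimpleGraph V)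
    [DecidableRel G.Adj] (Δ : ℕ) (hΔ : 2 ≤ Δ) (hdeg : ∀ v, G.degree v ≤ Δ)
    (u : V) (s : ℕ) :
    (Nat.card {S : Finset V // u ∈ S ∧ S.card = s ∧
        (G.induce (↑S : Set V)).Connected} : ℝ) ≤
      (1 / (s : ℝ)) * ((s * Δ).choose (s - 1) : ℝ) := by
  classical
  letI : LinearOrder V := LinearOrder.lift' (Fintype.equivFin V) (Fintype.equivFin V).injective
  rcases Nat.eq_zero_or_pos s with rfl | hs
  · haveI : IsEmpty {S : Finset V // u ∈ S ∧ S.card = 0 ∧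
        (G.induce (↑S : Set V)).Connected} := ⟨fun ⟨S, h1, h2, _⟩ => by
      rw [Finset.card_eq_zero] at h2
      subst h2
      exact absurd h1 (Finset.notMem_empty u)⟩
    rw [Nat.card_of_isEmpty]
    norm_num
  · have hΔpos : 0 < Δ := by omega
    set T := {S : Finset V // u ∈ S ∧ S.card = s ∧
        (G.induce (↑S : Set V)).Connected} with hT
    have hmain : Nat.card T ≤ Nat.card {A : Finset (Fin (s*Δ)) // CSC.Valid Δ s A} := by
      have hg : ∀ St : T, ∃ A : Finset (Fin (s*Δ)), CSC.Valid Δ s A ∧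
          (Finset.range s).image (CSC.dec G Δ u ((A.sort (· ≤ ·)).map Fin.val)) = St.1 :=
        fun ⟨S, h1, h2, h3⟩ => CSC.exists_code hΔpos hdeg h1 hs h2 h3
      choose g hg1 hg2 using hg
      apply Nat.card_le_card_of_injective (fun St => (⟨g St, hg1 St⟩ :
        {A : Finset (Fin (s*Δ)) // CSC.Valid Δ s A}))
      intro a b hab
      apply Subtype.ext
      have hab' : g a = g b := congrArg Subtype.val hab
      rw [← hg2 a, ← hg2 b, hab']
    have hcount := CSC.card_valid_bound (Δ := Δ) (s := s) hΔpos hs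
    have hkey : s * Nat.card T ≤ (s * Δ).choose (s - 1) :=
      le_trans (Nat.mul_le_mul_left s hmain) hcount
    have hs' : (0:ℝ) < s := by exact_mod_cast hs
    rw [one_div, inv_mul_eq_div, le_div_iff₀ hs']
    exact_mod_cast (mul_comm s (Nat.card T) ▸ hkey)
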